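/- (NEP with respect to relative entropy, Chernoff part) Let t be a type on X with T^n_t nonempty, fix x^n in T^n_t, and let Y_1,...,Y_n be independent with Y_i distributed according to p(.|x_i). Then for every delta >= 0: Pr{ (1/n) sum_{i=1}^n ln( p(Y_i|x_i)/q_t(Y_i) ) <= I(t;P) - delta } <= e^{-n r_-(t,delta)}, where r_-(t,delta) = sup_{lambda>=0} [ lambda ( delta - I(t;P) ) - sum_a t(a) ln sum_y p(y|a) ( p(y|a)/q_t(y) )^{-lambda} ] (inner sums over y with p(y|a) > 0). -/
import Mathlib


open scoped Classical BigOperators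
open Finset

noncomputable section

/-- The Gaussian tail function `Q(s) = (1/sqrt(2*pi)) * int_s^infty e^{-x^2/2} dx`. -/
def gaussQ (s : ℝ) : ℝ :=
  (1 / Real.sqrt (2 * Real.pi)) * ∫ x in Set.Ioi s, Real.exp (-x ^ 2 / 2)

/-- The inverse of the Gaussian tail function (on `(0,1)`). -/
def gaussQinv : ℝ → ℝ := Function.invFun gaussQ

/-- A discrete memoryless channel with finite input alphabet `X` and finite output
alphabet `Y`: transition probabilities `p x y = p(y|x)` with rows summing to one. -/
structure DIMC (X Y : Type) [Fintype X] [Fintype Y] where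
  p : X → Y → ℝ
  p_nonneg : ∀ x y, 0 ≤ p x y
  p_sum : ∀ x, ∑ y, p x y = 1

/-- `t` is a type (an empirical distribution with denominator `n`) on `X`. -/
def IsType {X : Type} [Fintype X] (n : ℕ) (t : X → ℝ) : Prop :=
  (∀ x, 0 ≤ t x) ∧ (∑ x, t x = 1) ∧ ∀ x, ∃ m : ℕ, t x * n = m

/-- `T^n_t`: the set of sequences of length `n` with empirical distribution `t`. -/
def typeClass {X : Type} [Fintype X] (n : ℕ) (t : X → ℝ) : Finset (Fin n → X) :=
  Finset.univ.filter fun xv =>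
    ∀ x, ((Finset.univ.filter fun i => xv i = x).card : ℝ) = (n : ℝ) * t x

/-- Entropy `H(t)` of a distribution on `X` (in nats). -/
def typeEnt {X : Type} [Fintype X] (t : X → ℝ) : ℝ := -∑ x, t x * Real.log (t x)

namespace DIMC

variable {X Y : Type} [Fintype X] [Fintype Y] (W : DIMC X Y)

/-- Output distribution `q_t` induced by input distribution `t`. -/
def qOut (t : X → ℝ) (y : Y) : ℝ := ∑ x, t x * W.p x y

/-- Mutual information `I(t;P)` (with the convention `0 ln 0 = 0`). -/
def mutInfo (t : X → ℝ) : ℝ :=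
  ∑ x, t x * ∑ y, W.p x y * Real.log (W.p x y / W.qOut t y)

/-- The DIMC jar based on type `t`. -/
def dJar (n : ℕ) (t : X → ℝ) (δ : ℝ) (yv : Fin n → Y) : Finset (Fin n → X) :=
  (typeClass n t).filter fun xv =>
    0 < (∏ i, W.p (xv i) (yv i)) ∧
      -(1 / (n : ℝ)) * ∑ i, Real.log (W.p (xv i) (yv i) / W.qOut t (yv i)) <
        -W.mutInfo t + δ

/-- `P_{t,δ}`, expressed as a function of the transmitted sequence `xv` (it depends on
`xv` only through its type `t`). -/
def Ptd (n : ℕ) (t : X → ℝ) (δ : ℝ) (xv : Fin n → X) : ℝ :=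
  ∑ yv : Fin n → Y,
    (∏ i, W.p (xv i) (yv i)) *
      (if -W.mutInfo t + δ ≤
          -(1 / (n : ℝ)) * ∑ i, Real.log (W.p (xv i) (yv i) / W.qOut t (yv i))
        then 1 else 0)

/-- Jar-decoding error probability for the Shannon random code ensemble with fixed
codeword type `t`: the `2^k` codewords are i.i.d. uniform on `T^n_t`, the message is
uniform, and the channel acts memorylessly. -/
def PerrT (n k : ℕ) (t : X → ℝ) (δ : ℝ) : ℝ :=
  ∑ cb : Fin (2 ^ k) → Fin n → X, ∑ q : Fin (2 ^ k), ∑ yv : Fin n → Y,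
    (∏ j, if cb j ∈ typeClass n t then 1 / ((typeClass n t).card : ℝ) else 0) *
      ((1 / (2 ^ k : ℝ)) *
        ((∏ i, W.p (cb q i) (yv i)) *
          (if cb q ∉ W.dJar n t δ yv ∨ ∃ j, cb j ≠ cb q ∧ cb j ∈ W.dJar n t δ yv
            then 1 else 0)))

end DIMC

namespace DIMC

variable {X Y : Type} [Fintype X] [Fintype Y] (W : DIMC X Y)

/-- The outputs with positive probability given input `x`. -/
def suppY (x : X) : Finset Y := Finset.univ.filter fun y => 0 < W.p x y

/-- `sum_a t(a) ln sum_y p(y|a) (p(y|a)/q_t(y))^{-λ}` (inner sums over `y` with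
`p(y|a) > 0`). -/
def tiltLogMinus (t : X → ℝ) (lam : ℝ) : ℝ :=
  ∑ a, t a * Real.log (∑ y ∈ W.suppY a, W.p a y * (W.p a y / W.qOut t y) ^ (-lam))

/-- The rate function `r_-(t,δ)`. -/
def rMinus (t : X → ℝ) (δ : ℝ) : ℝ :=
  sSup ((fun lam => lam * (δ - W.mutInfo t) - W.tiltLogMinus t lam) '' Set.Ici 0)

/-- The tilting factor `f_{-λ,t}(y|x)`. -/
def fMinus (t : X → ℝ) (lam : ℝ) (x : X) (y : Y) : ℝ :=
  (W.p x y / W.qOut t y) ^ (-lam) /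
    ∑ v ∈ W.suppY x, W.p x v * (W.p x v / W.qOut t v) ^ (-lam)

/-- `D(t,x,λ)`. -/
def Dtilt (t : X → ℝ) (x : X) (lam : ℝ) : ℝ :=
  ∑ y ∈ W.suppY x, W.p x y * (W.fMinus t lam x y * Real.log (W.p x y / W.qOut t y))

/-- `δ_-(t,λ) = I(t;P) - sum_x t(x) D(t,x,λ)`. -/
def deltaMinus (t : X → ℝ) (lam : ℝ) : ℝ :=
  W.mutInfo t - ∑ x, t x * W.Dtilt t x lam

/-- `σ²_{D,-}(t;P,λ)`. -/
def sigmaSqMinus (t : X → ℝ) (lam : ℝ) : ℝ :=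
  ∑ x, t x * ∑ y ∈ W.suppY x,
    W.p x y * (W.fMinus t lam x y *
      |Real.log (W.p x y / W.qOut t y) - W.Dtilt t x lam| ^ 2)

/-- `M_{D,-}(t;P,λ)`. -/
def MMinus (t : X → ℝ) (lam : ℝ) : ℝ :=
  ∑ x, t x * ∑ y ∈ W.suppY x,
    W.p x y * (W.fMinus t lam x y *
      |Real.log (W.p x y / W.qOut t y) - W.Dtilt t x lam| ^ 3)

/-- `ξ̄_{D,-}(t;P,λ,n)` with the Berry-Esseen constant `C = 0.56`. -/
def xiBarMinus (t : X → ℝ) (lam : ℝ) (n : ℕ) : ℝ :=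
  2 * 0.56 * W.MMinus t lam / (Real.sqrt n * Real.sqrt (W.sigmaSqMinus t lam) ^ 3) +
    Real.exp ((n : ℝ) * lam ^ 2 * W.sigmaSqMinus t lam / 2) *
      (gaussQ (Real.sqrt n * lam * Real.sqrt (W.sigmaSqMinus t lam)) -
        gaussQ
          (gaussQinv
              (0.56 * W.MMinus t lam /
                (Real.sqrt n * Real.sqrt (W.sigmaSqMinus t lam) ^ 3)) +
            Real.sqrt n * lam * Real.sqrt (W.sigmaSqMinus t lam)))

/-- `ξ̲_{D,-}(t;P,λ,n)` with the Berry-Esseen constant `C = 0.56`. -/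
def xiUnderMinus (t : X → ℝ) (lam : ℝ) (n : ℕ) : ℝ :=
  Real.exp ((n : ℝ) * lam ^ 2 * W.sigmaSqMinus t lam / 2) *
    gaussQ
      (gaussQinv
          (1 / 2 - 2 * 0.56 * W.MMinus t lam /
            (Real.sqrt n * Real.sqrt (W.sigmaSqMinus t lam) ^ 3)) +
        Real.sqrt n * lam * Real.sqrt (W.sigmaSqMinus t lam))

/-- The probability (over the channel outputs `Y_1, ..., Y_n`, independent with
`Y_i ~ p(.|x_i)`) that `(1/n) sum_i ln(p(Y_i|x_i)/q_t(Y_i)) <= I(t;P) - δ`. -/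
def relTail (n : ℕ) (t : X → ℝ) (δ : ℝ) (xv : Fin n → X) : ℝ :=
  ∑ yv : Fin n → Y,
    (∏ i, W.p (xv i) (yv i)) *
      (if (1 / (n : ℝ)) * ∑ i, Real.log (W.p (xv i) (yv i) / W.qOut t (yv i)) ≤
          W.mutInfo t - δ
        then 1 else 0)

/-- `D(t,x)`. -/
def Dx (t : X → ℝ) (x : X) : ℝ :=
  ∑ y ∈ W.suppY x, W.p x y * Real.log (W.p x y / W.qOut t y)

/-- The conditional divergence variance `σ²_D(t;P)`. -/
def sigmaSqD (t : X → ℝ) : ℝ :=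
  ∑ x, t x *
    ((∑ y ∈ W.suppY x, W.p x y * Real.log (W.p x y / W.qOut t y) ^ 2) - W.Dx t x ^ 2)

/-- The conditional divergence third absolute moment `M_D(t;P)`. -/
def MD (t : X → ℝ) : ℝ :=
  ∑ x, t x * ∑ y ∈ W.suppY x,
    W.p x y * |Real.log (W.p x y / W.qOut t y) - W.Dx t x| ^ 3

end DIMC

private lemma chernoff_single {X Y : Type} [Fintype X] [Fintype Y] (W : DIMC X Y)
    (n : ℕ) (hn : 0 < n) (t : X → ℝ) (ht : IsType n t)
    (xv : Fin n → X) (hxv : xv ∈ typeClass n t) (δ : ℝ) (lam : ℝ) (hlam : 0 ≤ lam) :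
    W.relTail n t δ xv ≤
      Real.exp (-(n : ℝ) * (lam * (δ - W.mutInfo t) - W.tiltLogMinus t lam)) := by
  classical
  have hnpos : (0:ℝ) < n := by exact_mod_cast hn
  have hcard : ∀ x, ((univ.filter fun i => xv i = x).card : ℝ) = (n:ℝ) * t x :=
    (Finset.mem_filter.mp hxv).2
  have htnonneg := ht.1
  have htpos : ∀ i, 0 < t (xv i) := by
    intro i
    have h1 : 0 < ((univ.filter fun j => xv j = xv i).card : ℝ) := by
      have hi : i ∈ univ.filter fun j => xv j = xv i := by simp
      exact_mod_cast Finset.card_pos.mpr ⟨i, hi⟩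
    rw [hcard] at h1
    nlinarith
  have hq : ∀ i y, 0 < W.p (xv i) y → 0 < W.qOut t y := by
    intro i y hp
    have hle : t (xv i) * W.p (xv i) y ≤ W.qOut t y :=
      Finset.single_le_sum (fun x _ => mul_nonneg (htnonneg x) (W.p_nonneg x y))
        (mem_univ (xv i))
    exact lt_of_lt_of_le (mul_pos (htpos i) hp) hle
  set F : X → ℝ := fun a => ∑ y ∈ W.suppY a, W.p a y * (W.p a y / W.qOut t y) ^ (-lam)
    with hF
  have hFpos : ∀ i, 0 < F (xv i) := by
    intro i
    have hex : ∃ y, 0 < W.p (xv i) y := by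
      by_contra h
      push_neg at h
      have h0 : ∑ y, W.p (xv i) y = 0 :=
        Finset.sum_eq_zero fun y _ => le_antisymm (h y) (W.p_nonneg _ y)
      rw [W.p_sum] at h0; norm_num at h0
    obtain ⟨y0, hy0⟩ := hex
    apply Finset.sum_pos
    · intro y hy
      have hpy : 0 < W.p (xv i) y := (Finset.mem_filter.mp hy).2
      exact mul_pos hpy (Real.rpow_pos_of_pos (div_pos hpy (hq i y hpy)) _)
    · exact ⟨y0, by simp [DIMC.suppY, hy0]⟩
  have step1 : W.relTail n t δ xv ≤ ∑ yv : Fin n → Y,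
      (∏ i, W.p (xv i) (yv i)) *
        Real.exp (lam * ((n:ℝ) * (W.mutInfo t - δ) -
          ∑ i, Real.log (W.p (xv i) (yv i) / W.qOut t (yv i)))) := by
    apply Finset.sum_le_sum
    intro yv _
    have hprodnn : 0 ≤ ∏ i, W.p (xv i) (yv i) :=
      Finset.prod_nonneg fun i _ => W.p_nonneg _ _
    by_cases h : (1 / (n:ℝ)) * ∑ i, Real.log (W.p (xv i) (yv i) / W.qOut t (yv i)) ≤
        W.mutInfo t - δ
    · rw [if_pos h]
      apply mul_le_mul_of_nonneg_left _ hprodnn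
      apply Real.one_le_exp
      have hS : ∑ i, Real.log (W.p (xv i) (yv i) / W.qOut t (yv i)) ≤
          (n:ℝ) * (W.mutInfo t - δ) := by
        have h2 := mul_le_mul_of_nonneg_left h (le_of_lt hnpos)
        calc ∑ i, Real.log (W.p (xv i) (yv i) / W.qOut t (yv i))
            = (n:ℝ) * ((1/(n:ℝ)) * ∑ i, Real.log (W.p (xv i) (yv i) / W.qOut t (yv i))) := by
              field_simp
          _ ≤ (n:ℝ) * (W.mutInfo t - δ) := h2
      exact mul_nonneg hlam (by linarith)
    · rw [if_neg h, mul_zero]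
      exact mul_nonneg hprodnn (Real.exp_pos _).le
  have step2 : ∀ yv : Fin n → Y,
      (∏ i, W.p (xv i) (yv i)) *
        Real.exp (lam * ((n:ℝ)*(W.mutInfo t - δ) -
          ∑ i, Real.log (W.p (xv i) (yv i) / W.qOut t (yv i)))) =
      Real.exp ((n:ℝ) * lam * (W.mutInfo t - δ)) *
        ∏ i, (W.p (xv i) (yv i) *
          Real.exp (-lam * Real.log (W.p (xv i) (yv i) / W.qOut t (yv i)))) := by
    intro yv
    have h1 : Real.exp (lam * ((n:ℝ)*(W.mutInfo t - δ) -
        ∑ i, Real.log (W.p (xv i) (yv i) / W.qOut t (yv i)))) =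
        Real.exp ((n:ℝ)*lam*(W.mutInfo t - δ)) *
          Real.exp (-lam * ∑ i, Real.log (W.p (xv i) (yv i) / W.qOut t (yv i))) := by
      rw [← Real.exp_add]; congr 1; ring
    rw [h1, Finset.prod_mul_distrib, ← Real.exp_sum, ← Finset.mul_sum]
    ring
  have step3 : ∑ yv : Fin n → Y,
      ∏ i, (W.p (xv i) (yv i) *
        Real.exp (-lam * Real.log (W.p (xv i) (yv i) / W.qOut t (yv i)))) =
      ∏ i, ∑ y, (W.p (xv i) y *
        Real.exp (-lam * Real.log (W.p (xv i) y / W.qOut t y))) := by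
    rw [Finset.prod_univ_sum, Fintype.piFinset_univ]
  have step4 : ∀ i, ∑ y, (W.p (xv i) y *
      Real.exp (-lam * Real.log (W.p (xv i) y / W.qOut t y))) = F (xv i) := by
    intro i
    have hz : ∀ y ∈ (univ : Finset Y), y ∉ W.suppY (xv i) →
        W.p (xv i) y * Real.exp (-lam * Real.log (W.p (xv i) y / W.qOut t y)) = 0 := by
      intro y _ hy
      have hp0 : W.p (xv i) y = 0 := by
        by_contra h
        exact hy (Finset.mem_filter.mpr ⟨mem_univ y,
          lt_of_le_of_ne (W.p_nonneg _ _) (Ne.symm h)⟩)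
      simp [hp0]
    rw [← Finset.sum_subset (Finset.subset_univ (W.suppY (xv i))) hz, hF]
    apply Finset.sum_congr rfl
    intro y hy
    have hpy : 0 < W.p (xv i) y := (Finset.mem_filter.mp hy).2
    have hr : 0 < W.p (xv i) y / W.qOut t y := div_pos hpy (hq i y hpy)
    rw [Real.rpow_def_of_pos hr, mul_comm (Real.log _) (-lam)]
  have step5 : ∏ i, F (xv i) = Real.exp ((n:ℝ) * W.tiltLogMinus t lam) := by
    have h1 : ∏ i, F (xv i) = Real.exp (∑ i, Real.log (F (xv i))) := by
      rw [Real.exp_sum]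
      exact Finset.prod_congr rfl fun i _ => (Real.exp_log (hFpos i)).symm
    rw [h1]
    congr 1
    have h2 : ∑ i, Real.log (F (xv i)) =
        ∑ a, ∑ i ∈ univ.filter (fun i => xv i = a), Real.log (F (xv i)) :=
      (Finset.sum_fiberwise univ (fun i => xv i) (fun i => Real.log (F (xv i)))).symm
    rw [h2, DIMC.tiltLogMinus, Finset.mul_sum]
    apply Finset.sum_congr rfl
    intro a _
    have h3 : ∑ i ∈ univ.filter (fun i => xv i = a), Real.log (F (xv i)) =
        ((univ.filter (fun i => xv i = a)).card : ℝ) * Real.log (F a) := by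
      rw [Finset.sum_congr rfl (fun i hi => by rw [(Finset.mem_filter.mp hi).2]),
        Finset.sum_const, nsmul_eq_mul]
    rw [h3, hcard a]
    simp only [hF]
    ring
  calc W.relTail n t δ xv
      ≤ ∑ yv : Fin n → Y, (∏ i, W.p (xv i) (yv i)) *
          Real.exp (lam * ((n:ℝ) * (W.mutInfo t - δ) -
            ∑ i, Real.log (W.p (xv i) (yv i) / W.qOut t (yv i)))) := step1
    _ = ∑ yv : Fin n → Y, Real.exp ((n:ℝ)*lam*(W.mutInfo t - δ)) *
          ∏ i, (W.p (xv i) (yv i) *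
            Real.exp (-lam * Real.log (W.p (xv i) (yv i) / W.qOut t (yv i)))) :=
        Finset.sum_congr rfl fun yv _ => step2 yv
    _ = Real.exp ((n:ℝ)*lam*(W.mutInfo t - δ)) * ∑ yv : Fin n → Y,
          ∏ i, (W.p (xv i) (yv i) *
            Real.exp (-lam * Real.log (W.p (xv i) (yv i) / W.qOut t (yv i)))) :=
        (Finset.mul_sum _ _ _).symm
    _ = Real.exp ((n:ℝ)*lam*(W.mutInfo t - δ)) *
          ∏ i, ∑ y, (W.p (xv i) y *
            Real.exp (-lam * Real.log (W.p (xv i) y / W.qOut t y))) := by rw [step3]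
    _ = Real.exp ((n:ℝ)*lam*(W.mutInfo t - δ)) * ∏ i, F (xv i) := by
        rw [Finset.prod_congr rfl fun i _ => step4 i]
    _ = Real.exp ((n:ℝ)*lam*(W.mutInfo t - δ)) *
          Real.exp ((n:ℝ) * W.tiltLogMinus t lam) := by rw [step5]
    _ = Real.exp (-(n : ℝ) * (lam * (δ - W.mutInfo t) - W.tiltLogMinus t lam)) := by
        rw [← Real.exp_add]; congr 1; ring

/-- NEP w.r.t. relative entropy, Chernoff part: for a type `t`, a
sequence `x^n ∈ T^n_t`, and independent outputs `Y_i ~ p(.|x_i)`, for every `δ ≥ 0`,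
`Pr{ (1/n) sum_i ln(p(Y_i|x_i)/q_t(Y_i)) ≤ I(t;P) - δ } ≤ e^{-n r_-(t,δ)}`. -/
theorem nep_relEnt_chernoff {X Y : Type} [Fintype X] [Fintype Y] (W : DIMC X Y)
    (n : ℕ) (hn : 0 < n) (t : X → ℝ) (ht : IsType n t)
    (xv : Fin n → X) (hxv : xv ∈ typeClass n t) (δ : ℝ) (hδ : 0 ≤ δ) :
    W.relTail n t δ xv ≤ Real.exp (-(n : ℝ) * W.rMinus t δ) := by
  classical
  have hnpos : (0:ℝ) < n := by exact_mod_cast hn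
  set S : Set ℝ := (fun lam => lam * (δ - W.mutInfo t) - W.tiltLogMinus t lam) '' Set.Ici 0
    with hSdef
  have key : ∀ s ∈ S, W.relTail n t δ xv ≤ Real.exp (-(n:ℝ) * s) := by
    rintro s ⟨lam, hlam, rfl⟩
    exact chernoff_single W n hn t ht xv hxv δ lam hlam
  have hne : S.Nonempty := ⟨0 * (δ - W.mutInfo t) - W.tiltLogMinus t 0,
    ⟨0, Set.mem_Ici.mpr le_rfl, rfl⟩⟩
  have hr : W.rMinus t δ = sSup S := rfl
  rcases le_or_gt (W.relTail n t δ xv) 0 with h | h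
  · exact h.trans (Real.exp_pos _).le
  · have hb : ∀ s ∈ S, s ≤ -Real.log (W.relTail n t δ xv) / n := by
      intro s hs
      have h1 := key s hs
      have h2 : Real.log (W.relTail n t δ xv) ≤ -(n:ℝ) * s := by
        calc Real.log (W.relTail n t δ xv)
            ≤ Real.log (Real.exp (-(n:ℝ)*s)) := Real.log_le_log h h1
          _ = -(n:ℝ)*s := Real.log_exp _
      rw [le_div_iff₀ hnpos]
      linarith
    have hsup : sSup S ≤ -Real.log (W.relTail n t δ xv) / n := csSup_le hne hb
    have h3 : sSup S * (n:ℝ) ≤ -Real.log (W.relTail n t δ xv) :=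
      (le_div_iff₀ hnpos).mp hsup
    have h4 : Real.log (W.relTail n t δ xv) ≤ -(n:ℝ) * sSup S := by
      have := mul_comm (sSup S) (n:ℝ)
      linarith
    rw [hr]
    calc W.relTail n t δ xv = Real.exp (Real.log (W.relTail n t δ xv)) :=
          (Real.exp_log h).symm
      _ ≤ Real.exp (-(n:ℝ) * sSup S) := Real.exp_le_exp.mpr h4
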